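/- arXiv:2310.09639 — 2 statements merged into one kernel-verified Lean document; each statement's English description precedes it below -/
import Mathlib

section
/- Let d ≥ 1, let f : ℝ^d → ℝ be ℓ-smooth, and let λ > 0. Define the smoothed function f_λ(x) = E_v[f(x + λ v)], where v is uniformly distributed on the Euclidean ball √d·B^d = {x ∈ ℝ^d : ‖x‖ ≤ √d}. Then for every x ∈ ℝ^d, ‖∇f(x) − ∇f_λ(x)‖ ≤ (ℓ/2) · λ · d^{3/2}. -/
open MeasureTheory Real

noncomputable section

/-- The uniform probability measure (normalized Lebesgue measure) on the closed Euclidean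
ball of radius `√d` centered at the origin in `ℝ^d`. -/
def ballUniform (d : ℕ) : Measure (EuclideanSpace ℝ (Fin d)) :=
  (volume (Metric.closedBall (0 : EuclideanSpace ℝ (Fin d)) (Real.sqrt d)))⁻¹ •
    volume.restrict (Metric.closedBall (0 : EuclideanSpace ℝ (Fin d)) (Real.sqrt d))

open Metric

lemma integral_norm_cb (d : ℕ) (hd : 1 ≤ d) (R : ℝ) (hR : 0 ≤ R) :
    ∫ v in closedBall (0 : EuclideanSpace ℝ (Fin d)) R, ‖v‖ =
      (volume (closedBall (0 : EuclideanSpace ℝ (Fin d)) R)).toReal * ((d : ℝ) * R / (d + 1)) := by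
  have : Nonempty (Fin d) := Fin.pos_iff_nonempty.mp hd
  have h1 : ∫ v in closedBall (0 : EuclideanSpace ℝ (Fin d)) R, ‖v‖ =
      ∫ v : EuclideanSpace ℝ (Fin d), Set.indicator (Set.Iic R) id ‖v‖ := by
    rw [← integral_indicator measurableSet_closedBall]
    congr 1
    ext v
    by_cases hv : ‖v‖ ≤ R
    · rw [Set.indicator_of_mem (mem_closedBall_zero_iff.mpr hv),
        Set.indicator_of_mem (Set.mem_Iic.mpr hv), id]
    · rw [Set.indicator_of_notMem (fun h => hv (mem_closedBall_zero_iff.mp h)),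
        Set.indicator_of_notMem (fun h => hv (Set.mem_Iic.mp h))]
  rw [h1, integral_fun_norm_addHaar volume (Set.indicator (Set.Iic R) id)]
  have h2 : ∀ y : ℝ, y ^ (Module.finrank ℝ (EuclideanSpace ℝ (Fin d)) - 1) •
      Set.indicator (Set.Iic R) id y = Set.indicator (Set.Iic R) (fun y => y ^ d) y := by
    intro y
    rw [finrank_euclideanSpace_fin]
    by_cases hy : y ∈ Set.Iic R
    · rw [Set.indicator_of_mem hy, Set.indicator_of_mem hy, id, smul_eq_mul,
        ← pow_succ, Nat.sub_add_cancel hd]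
    · rw [Set.indicator_of_notMem hy, Set.indicator_of_notMem hy, smul_zero]
  simp only [h2]
  rw [integral_indicator measurableSet_Iic, Measure.restrict_restrict measurableSet_Iic,
    Set.Iic_inter_Ioi, ← intervalIntegral.integral_of_le hR, integral_pow]
  rw [Measure.addHaar_closedBall _ _ hR, finrank_euclideanSpace_fin,
    ENNReal.toReal_mul, ENNReal.toReal_ofReal (by positivity)]
  rw [nsmul_eq_mul, smul_eq_mul]
  have hV : (volume (ball (0 : EuclideanSpace ℝ (Fin d)) 1)).toReal = (volume (ball (0 : EuclideanSpace ℝ (Fin d)) 1)).toReal := rfl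
  field_simp
  ring_nf
  rw [measureReal_def]
  ring

lemma ballUniform_vol_ne_zero (d : ℕ) (hd : 1 ≤ d) :
    volume (closedBall (0 : EuclideanSpace ℝ (Fin d)) (Real.sqrt d)) ≠ 0 :=
  (measure_closedBall_pos volume _ (Real.sqrt_pos.mpr (by exact_mod_cast hd))).ne'

lemma ballUniform_vol_ne_top (d : ℕ) :
    volume (closedBall (0 : EuclideanSpace ℝ (Fin d)) (Real.sqrt d)) ≠ ⊤ :=
  measure_closedBall_lt_top.ne

lemma ballUniform_isProb (d : ℕ) (hd : 1 ≤ d) : IsProbabilityMeasure (ballUniform d) := by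
  constructor
  rw [ballUniform, Measure.smul_apply, Measure.restrict_apply_univ, smul_eq_mul,
    ENNReal.inv_mul_cancel (ballUniform_vol_ne_zero d hd) (ballUniform_vol_ne_top d)]

lemma integral_norm_ballUniform (d : ℕ) (hd : 1 ≤ d) :
    ∫ v, ‖v‖ ∂(ballUniform d) ≤ (d : ℝ) ^ ((3 : ℝ) / 2) / 2 := by
  have hB0 := ballUniform_vol_ne_zero d hd
  have hBt := ballUniform_vol_ne_top d
  have hd1 : (1 : ℝ) ≤ d := by exact_mod_cast hd
  rw [ballUniform, integral_smul_measure, integral_norm_cb d hd _ (Real.sqrt_nonneg _),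
    smul_eq_mul, ← mul_assoc, ENNReal.toReal_inv, inv_mul_cancel₀
      (by simp [ENNReal.toReal_ne_zero, hB0, hBt]), one_mul]
  have hrp : (d : ℝ) ^ ((3 : ℝ) / 2) = d * Real.sqrt d := by
    rw [show (3 : ℝ) / 2 = 1 + 1 / 2 by norm_num, Real.rpow_add (by linarith), Real.rpow_one,
      ← Real.sqrt_eq_rpow]
  rw [hrp]
  rw [div_le_div_iff₀ (by linarith) (by norm_num)]
  have h : 0 ≤ (d : ℝ) * Real.sqrt d := by positivity
  nlinarith [Real.sqrt_nonneg (d : ℝ)]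

lemma integrable_ballUniform {d : ℕ} (hd : 1 ≤ d) {F : Type*} [NormedAddCommGroup F]
    [NormedSpace ℝ F] {g : EuclideanSpace ℝ (Fin d) → F} (hg : Continuous g) :
    Integrable g (ballUniform d) := by
  rw [ballUniform]
  refine Integrable.smul_measure ?_ (by simp [ballUniform_vol_ne_zero d hd])
  exact (hg.continuousOn).integrableOn_compact (isCompact_closedBall _ _)

theorem gradient_smoothed_close
    (d : ℕ) (hd : 1 ≤ d) (ell lam : ℝ) (hlam : 0 < lam)
    (f : EuclideanSpace ℝ (Fin d) → ℝ)
    (hf : Differentiable ℝ f)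
    (hsmooth : ∀ x y : EuclideanSpace ℝ (Fin d),
      ‖gradient f x - gradient f y‖ ≤ ell * ‖x - y‖) :
    ∀ x : EuclideanSpace ℝ (Fin d),
      ‖gradient f x - gradient (fun y => ∫ v, f (y + lam • v) ∂(ballUniform d)) x‖ ≤
        (ell / 2) * lam * (d : ℝ) ^ ((3 : ℝ) / 2) := by
  intro x
  haveI : IsProbabilityMeasure (ballUniform d) := ballUniform_isProb d hd
  set μ := ballUniform d with hμ
  have hfd : ∀ a b, ‖fderiv ℝ f a - fderiv ℝ f b‖ ≤ ell * ‖a - b‖ := by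
    intro a b
    have h := hsmooth a b
    rwa [gradient, gradient, ← map_sub, LinearIsometryEquiv.norm_map] at h
  have hell : 0 ≤ ell := by
    have : Nonempty (Fin d) := Fin.pos_iff_nonempty.mp hd
    obtain ⟨b, hb⟩ := exists_ne (0 : EuclideanSpace ℝ (Fin d))
    have h1 : (0 : ℝ) ≤ ell * ‖b - 0‖ := le_trans (norm_nonneg _) (hfd b 0)
    have h2 : 0 < ‖b - 0‖ := by simpa [sub_zero] using norm_pos_iff.mpr hb
    by_contra h
    nlinarith
  have hcont : Continuous fun a => fderiv ℝ f a := by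
    refine LipschitzWith.continuous (K := Real.toNNReal ell) ?_
    refine LipschitzWith.of_dist_le_mul fun a b => ?_
    rw [dist_eq_norm, dist_eq_norm]
    exact (hfd a b).trans
      (mul_le_mul_of_nonneg_right (Real.le_coe_toNNReal ell) (norm_nonneg _))
  have hae : ∀ᵐ v ∂μ, ‖v‖ ≤ Real.sqrt d := by
    rw [hμ, ballUniform]
    refine Measure.ae_smul_measure ?_ _
    filter_upwards [ae_restrict_mem measurableSet_closedBall] with v hv
    exact mem_closedBall_zero_iff.mp hv
  have hIg : Integrable (fun v => fderiv ℝ f (x + lam • v)) μ :=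
    integrable_ballUniform hd (hcont.comp (by fun_prop))
  have hF' : HasFDerivAt (fun y => ∫ v, f (y + lam • v) ∂μ)
      (∫ v, fderiv ℝ f (x + lam • v) ∂μ) x := by
    refine hasFDerivAt_integral_of_dominated_of_fderiv_le
      (F' := fun y v => fderiv ℝ f (y + lam • v))
      (bound := fun _ => ‖fderiv ℝ f x‖ + ell * (1 + lam * Real.sqrt d))
      (Metric.ball_mem_nhds x one_pos) ?_ ?_ ?_ ?_ ?_ ?_
    · exact Filter.Eventually.of_forall fun y =>
        (hf.continuous.comp (by fun_prop)).aestronglyMeasurable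
    · exact integrable_ballUniform hd (hf.continuous.comp (by fun_prop))
    · exact (hcont.comp (show Continuous fun v : EuclideanSpace ℝ (Fin d) => x + lam • v
        by fun_prop)).aestronglyMeasurable
    · filter_upwards [hae] with v hv
      intro y hy
      have h3 : ‖fderiv ℝ f (y + lam • v)‖ - ‖fderiv ℝ f x‖ ≤ ell * ‖y + lam • v - x‖ :=
        le_trans (norm_sub_norm_le _ _) (hfd (y + lam • v) x)
      have h4 : ‖y + lam • v - x‖ ≤ 1 + lam * Real.sqrt d := by
        have h5 : y + lam • v - x = (y - x) + lam • v := by abel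
        rw [h5]
        have h6 : ‖y - x‖ < 1 := by rwa [← dist_eq_norm, ← mem_ball]
        have h7 : ‖lam • v‖ = lam * ‖v‖ := by
          rw [norm_smul, Real.norm_eq_abs, abs_of_pos hlam]
        have := norm_add_le (y - x) (lam • v)
        nlinarith
      nlinarith [mul_le_mul_of_nonneg_left h4 hell]
    · exact integrable_const _
    · refine Filter.Eventually.of_forall fun v y hy => ?_
      have h := (hf (y + lam • v)).hasFDerivAt.comp y ((hasFDerivAt_id y).add_const (lam • v))
      simpa [Function.comp_def] using h
  have hgrad : gradient (fun y => ∫ v, f (y + lam • v) ∂μ) x =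
      (InnerProductSpace.toDual ℝ _).symm (∫ v, fderiv ℝ f (x + lam • v) ∂μ) := by
    rw [gradient, hF'.fderiv]
  rw [hgrad, gradient, ← map_sub, LinearIsometryEquiv.norm_map]
  have hsub : fderiv ℝ f x - ∫ v, fderiv ℝ f (x + lam • v) ∂μ =
      ∫ v, (fderiv ℝ f x - fderiv ℝ f (x + lam • v)) ∂μ := by
    rw [integral_sub (integrable_const _) hIg, integral_const, measureReal_def, measure_univ,
      ENNReal.toReal_one, one_smul]
  rw [hsub]
  calc ‖∫ v, (fderiv ℝ f x - fderiv ℝ f (x + lam • v)) ∂μ‖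
      ≤ ∫ v, ‖fderiv ℝ f x - fderiv ℝ f (x + lam • v)‖ ∂μ := norm_integral_le_integral_norm _
    _ ≤ ∫ v, ell * lam * ‖v‖ ∂μ := by
        refine integral_mono ((integrable_const _).sub hIg).norm
          ((integrable_ballUniform hd continuous_norm).const_mul _) fun v => ?_
        refine (hfd x (x + lam • v)).trans ?_
        have h8 : x - (x + lam • v) = -(lam • v) := by abel
        rw [h8, norm_neg, norm_smul, Real.norm_eq_abs, abs_of_pos hlam, mul_assoc]
    _ = ell * lam * ∫ v, ‖v‖ ∂μ := integral_const_mul _ _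
    _ ≤ ell * lam * ((d : ℝ) ^ ((3 : ℝ) / 2) / 2) :=
        mul_le_mul_of_nonneg_left (integral_norm_ballUniform d hd)
          (mul_nonneg hell hlam.le)
    _ = (ell / 2) * lam * (d : ℝ) ^ ((3 : ℝ) / 2) := by ring
end
end

section
/- Let d ≥ 1, let f : ℝ^d → ℝ be ℓ-smooth, and let λ > 0. Define the two-point zeroth-order gradient estimator g_λ(x) = ((f(x + λu) − f(x − λu)) / (2λ)) · u, where u is uniformly distributed on the Euclidean sphere √d·S^{d−1} = {x ∈ ℝ^d : ‖x‖ = √d}. Then for every x ∈ ℝ^d, E_u[‖g_λ(x)‖²] ≤ 2d · ‖∇f(x)‖² + (ℓ²/2) · λ² · d³. -/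
open MeasureTheory Real
open scoped RealInnerProductSpace ENNReal

noncomputable section

/-- The uniform (rotation-invariant) probability measure on the sphere of radius `√d`
centered at the origin in `ℝ^d`. -/
def IsUniformOnSphere (d : ℕ) (μ : Measure (EuclideanSpace ℝ (Fin d))) : Prop :=
  IsProbabilityMeasure μ ∧
  μ (Metric.sphere (0 : EuclideanSpace ℝ (Fin d)) (Real.sqrt d)) = 1 ∧
  ∀ T : EuclideanSpace ℝ (Fin d) ≃ₗᵢ[ℝ] EuclideanSpace ℝ (Fin d), Measure.map T μ = μ

section Aux

variable {F : Type*} [NormedAddCommGroup F] [InnerProductSpace ℝ F] [CompleteSpace F]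

lemma comp_hasDerivAt {f : F → ℝ} (hf : Differentiable ℝ f) (x h : F) (t : ℝ) :
    HasDerivAt (fun s : ℝ => f (x + s • h)) ⟪gradient f (x + t • h), h⟫ t := by
  have hline : HasDerivAt (fun s : ℝ => x + s • h) h t := by
    simpa using ((hasDerivAt_id t).smul_const h).const_add x
  have := ((hf (x + t • h)).hasGradientAt.hasFDerivAt.comp_hasDerivAt t hline)
  simpa [InnerProductSpace.toDual_apply_apply, Function.comp_def] using this

lemma taylor_bound {f : F → ℝ} (hf : Differentiable ℝ f) {ell : ℝ}
    (hsmooth : ∀ x y : F, ‖gradient f x - gradient f y‖ ≤ ell * ‖x - y‖)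
    (x h : F) : |f (x + h) - f x - ⟪gradient f x, h⟫| ≤ ell / 2 * ‖h‖ ^ 2 := by
  set v := gradient f x with hv
  have key : ∀ ε : ℝ, ε = 1 ∨ ε = -1 →
      ε * (f (x + h) - f x - ⟪v, h⟫) ≤ ell / 2 * ‖h‖ ^ 2 := by
    intro ε hε
    set g : ℝ → ℝ := fun t => ε * (f (x + t • h) - t * ⟪v, h⟫) - ell / 2 * ‖h‖ ^ 2 * t ^ 2
      with hg
    have hderiv : ∀ t : ℝ, HasDerivAt g
        (ε * (⟪gradient f (x + t • h), h⟫ - ⟪v, h⟫) - ell / 2 * ‖h‖ ^ 2 * (2 * t)) t := by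
      intro t
      have h1 := comp_hasDerivAt hf x h t
      have h2 : HasDerivAt (fun t : ℝ => t * ⟪v, h⟫) ⟪v, h⟫ t := by
        simpa using (hasDerivAt_id t).mul_const ⟪v, h⟫
      have h3 : HasDerivAt (fun t : ℝ => t ^ 2) (2 * t) t := by
        simpa using hasDerivAt_pow 2 t
      exact ((h1.sub h2).const_mul ε).sub ((h3.const_mul (ell / 2 * ‖h‖ ^ 2)))
    have hmono : AntitoneOn g (Set.Icc (0 : ℝ) 1) := by
      apply antitoneOn_of_deriv_nonpos (convex_Icc 0 1)
      · exact fun t _ => ((hderiv t).continuousAt).continuousWithinAt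
      · exact fun t _ => ((hderiv t).differentiableAt).differentiableWithinAt
      · intro t ht
        rw [interior_Icc] at ht
        rw [(hderiv t).deriv]
        have hb : ε * (⟪gradient f (x + t • h), h⟫ - ⟪v, h⟫) ≤ ell * t * ‖h‖ ^ 2 := by
          have h1 : ε * (⟪gradient f (x + t • h), h⟫ - ⟪v, h⟫)
              = ⟪ε • (gradient f (x + t • h) - v), h⟫ := by
            rw [real_inner_smul_left, inner_sub_left]
          rw [h1]
          calc ⟪ε • (gradient f (x + t • h) - v), h⟫
              ≤ ‖ε • (gradient f (x + t • h) - v)‖ * ‖h‖ := real_inner_le_norm _ _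
            _ ≤ ell * t * ‖h‖ ^ 2 := by
                rw [norm_smul]
                have hε1 : ‖ε‖ = 1 := by rcases hε with h | h <;> simp [h]
                rw [hε1, one_mul]
                have := hsmooth (x + t • h) x
                have h2 : ‖x + t • h - x‖ = t * ‖h‖ := by
                  rw [add_sub_cancel_left, norm_smul, Real.norm_eq_abs,
                    abs_of_nonneg ht.1.le]
                rw [h2] at this
                calc ‖gradient f (x + t • h) - v‖ * ‖h‖ ≤ ell * (t * ‖h‖) * ‖h‖ :=
                    mul_le_mul_of_nonneg_right this (norm_nonneg _)
                  _ = ell * t * ‖h‖ ^ 2 := by ring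
        nlinarith [hb, ht.1.le]
    have := hmono (Set.left_mem_Icc.2 zero_le_one) (Set.right_mem_Icc.2 zero_le_one)
      zero_le_one
    simp only [hg, zero_smul, add_zero, one_smul] at this
    nlinarith [this]
  rw [abs_le]
  constructor
  · have := key (-1) (Or.inr rfl); linarith
  · have := key 1 (Or.inl rfl); linarith


abbrev E (d : ℕ) := EuclideanSpace ℝ (Fin d)

lemma ae_norm {d : ℕ} {μ : Measure (E d)}
    (hprob : IsProbabilityMeasure μ)
    (hsph : μ (Metric.sphere (0 : E d) (Real.sqrt d)) = 1) :
    ∀ᵐ u ∂μ, ‖u‖ = Real.sqrt d := by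
  have hS : MeasurableSet (Metric.sphere (0 : E d) (Real.sqrt d)) :=
    Metric.isClosed_sphere.measurableSet
  have hc : μ (Metric.sphere (0 : E d) (Real.sqrt d))ᶜ = 0 := by
    rw [measure_compl hS (measure_ne_top μ _), measure_univ, hsph, tsub_self]
  have : ∀ᵐ u ∂μ, u ∈ Metric.sphere (0 : E d) (Real.sqrt d) := by
    rw [ae_iff, ← Set.compl_def]
    exact hc
  filter_upwards [this] with u hu
  simpa [Metric.mem_sphere, dist_zero_right] using hu

lemma integrable_inner_sq {d : ℕ} {μ : Measure (E d)}
    (hprob : IsProbabilityMeasure μ)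
    (hsph : μ (Metric.sphere (0 : E d) (Real.sqrt d)) = 1) (v : E d) :
    Integrable (fun u : E d => ⟪v, u⟫ ^ 2) μ := by
  apply Integrable.mono' (integrable_const (‖v‖ ^ 2 * d))
  · exact (Continuous.pow (continuous_const.inner continuous_id) 2).aestronglyMeasurable
  · filter_upwards [ae_norm hprob hsph] with u hu
    rw [Real.norm_eq_abs, abs_of_nonneg (sq_nonneg _)]
    calc ⟪v, u⟫ ^ 2 ≤ (‖v‖ * ‖u‖) ^ 2 := by
          have := abs_real_inner_le_norm v u
          nlinarith [abs_nonneg ⟪v, u⟫, sq_abs ⟪v, u⟫]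
      _ = ‖v‖ ^ 2 * d := by
          rw [hu, mul_pow, Real.sq_sqrt (Nat.cast_nonneg d)]

lemma inner_sq_integral {d : ℕ} (hd : 1 ≤ d) {μ : Measure (E d)}
    (hμ : IsProbabilityMeasure μ ∧
      μ (Metric.sphere (0 : E d) (Real.sqrt d)) = 1 ∧
      ∀ T : E d ≃ₗᵢ[ℝ] E d, Measure.map T μ = μ) (v : E d) :
    ∫ u, ⟪v, u⟫ ^ 2 ∂μ = ‖v‖ ^ 2 := by
  obtain ⟨hprob, hsph, hinv⟩ := hμ
  -- invariance of the integral
  have inv_step : ∀ (T : E d ≃ₗᵢ[ℝ] E d) (e : E d),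
      ∫ u, ⟪e, u⟫ ^ 2 ∂μ = ∫ u, ⟪T.symm e, u⟫ ^ 2 ∂μ := by
    intro T e
    conv_lhs => rw [← hinv T]
    rw [integral_map T.continuous.measurable.aemeasurable
      (Continuous.pow (continuous_const.inner continuous_id) 2).aestronglyMeasurable]
    congr 1
    funext u
    congr 1
    rw [← T.inner_map_map (T.symm e) u, T.apply_symm_apply]
  have same_norm : ∀ e e' : E d, ‖e‖ = ‖e'‖ →
      ∫ u, ⟪e, u⟫ ^ 2 ∂μ = ∫ u, ⟪e', u⟫ ^ 2 ∂μ := by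
    intro e e' hee
    set T := Submodule.reflection (ℝ ∙ (e - e'))ᗮ with hT
    have hTe : T e = e' := Submodule.reflection_sub hee
    have := inv_step T e'
    rw [Submodule.reflection_symm] at this
    have hTe' : T e' = e := by rw [← hTe]; exact Submodule.reflection_involutive _ e
    rw [this, hTe']
  -- sum over the standard basis
  set b := EuclideanSpace.basisFun (Fin d) ℝ with hb
  have parseval : ∀ u : E d, ∑ i, ⟪(b : OrthonormalBasis (Fin d) ℝ (E d)) i, u⟫ ^ 2 = ‖u‖ ^ 2 := by
    intro u
    have := b.sum_inner_mul_inner u u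
    simp only [real_inner_comm u] at this
    rw [← real_inner_self_eq_norm_sq]
    rw [← this]
    exact Finset.sum_congr rfl fun i _ => by rw [real_inner_comm, sq]
  have hsum : ∑ i, ∫ u, ⟪(b : OrthonormalBasis (Fin d) ℝ (E d)) i, u⟫ ^ 2 ∂μ = d := by
    rw [← integral_finset_sum _ (fun i _ => integrable_inner_sq hprob hsph _)]
    have : ∫ u, (∑ i, ⟪(b : OrthonormalBasis (Fin d) ℝ (E d)) i, u⟫ ^ 2) ∂μ
        = ∫ (_ : E d), (d : ℝ) ∂μ := by
      apply integral_congr_ae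
      filter_upwards [ae_norm hprob hsph] with u hu
      rw [parseval u, hu, Real.sq_sqrt (Nat.cast_nonneg d)]
    rw [this, integral_const, probReal_univ, one_smul]
  have i0 : Fin d := ⟨0, hd⟩
  have hnormb : ∀ i : Fin d, ‖(b : OrthonormalBasis (Fin d) ℝ (E d)) i‖ = 1 :=
    fun i => b.orthonormal.1 i
  have hconst : ∀ i : Fin d, ∫ u, ⟪(b : OrthonormalBasis (Fin d) ℝ (E d)) i, u⟫ ^ 2 ∂μ
      = ∫ u, ⟪(b : OrthonormalBasis (Fin d) ℝ (E d)) i0, u⟫ ^ 2 ∂μ := by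
    intro i
    exact same_norm _ _ (by rw [hnormb, hnormb])
  have hI0 : ∫ u, ⟪(b : OrthonormalBasis (Fin d) ℝ (E d)) i0, u⟫ ^ 2 ∂μ = 1 := by
    have : ∑ i : Fin d, ∫ u, ⟪(b : OrthonormalBasis (Fin d) ℝ (E d)) i, u⟫ ^ 2 ∂μ
        = d * ∫ u, ⟪(b : OrthonormalBasis (Fin d) ℝ (E d)) i0, u⟫ ^ 2 ∂μ := by
      rw [Finset.sum_congr rfl (fun i _ => hconst i), Finset.sum_const, Finset.card_univ,
        Fintype.card_fin, nsmul_eq_mul]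
    rw [this] at hsum
    have hd0 : (d : ℝ) ≠ 0 := by positivity
    exact mul_left_cancel₀ hd0 (hsum.trans (mul_one (d : ℝ)).symm)
  -- finish
  by_cases hv : v = 0
  · simp [hv]
  · have hvnorm : ‖v‖ ≠ 0 := norm_ne_zero_iff.2 hv
    have he : ‖(‖v‖⁻¹ • v : E d)‖ = 1 := by
      rw [norm_smul, norm_inv, norm_norm, inv_mul_cancel₀ hvnorm]
    have h1 : ∫ u, ⟪(‖v‖⁻¹ • v : E d), u⟫ ^ 2 ∂μ = 1 := by
      rw [same_norm (‖v‖⁻¹ • v) ((b : OrthonormalBasis (Fin d) ℝ (E d)) i0)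
        (he.trans (hnormb i0).symm)]
      exact hI0
    have h2 : ∀ u : E d, ⟪v, u⟫ ^ 2 = ‖v‖ ^ 2 * ⟪(‖v‖⁻¹ • v : E d), u⟫ ^ 2 := by
      intro u
      rw [real_inner_smul_left, mul_pow, ← mul_assoc, ← mul_pow,
        mul_inv_cancel₀ hvnorm, one_pow, one_mul]
    simp_rw [h2]
    rw [integral_const_mul, h1, mul_one]

end Aux

theorem zo_gradient_second_moment
    (d : ℕ) (hd : 1 ≤ d) (μ : Measure (EuclideanSpace ℝ (Fin d)))
    (hμ : IsUniformOnSphere d μ)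
    (ell lam : ℝ) (hlam : 0 < lam)
    (f : EuclideanSpace ℝ (Fin d) → ℝ)
    (hf : Differentiable ℝ f)
    (hsmooth : ∀ x y : EuclideanSpace ℝ (Fin d),
      ‖gradient f x - gradient f y‖ ≤ ell * ‖x - y‖) :
    ∀ x : EuclideanSpace ℝ (Fin d),
      (∫ u, ‖((f (x + lam • u) - f (x - lam • u)) / (2 * lam)) • u‖ ^ 2 ∂μ) ≤
        2 * d * ‖gradient f x‖ ^ 2 + (ell ^ 2 / 2) * lam ^ 2 * d ^ 3 := by
  intro x
  obtain ⟨hprob, hsph, hinv⟩ := hμ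
  haveI := hprob
  set v := gradient f x with hv
  have hdr : (1 : ℝ) ≤ (d : ℝ) := by exact_mod_cast hd
  have hdpos : (0 : ℝ) ≤ (d : ℝ) := by positivity
  have hG : Integrable
      (fun u : E d => 2 * (d : ℝ) * ⟪v, u⟫ ^ 2 + ell ^ 2 / 2 * lam ^ 2 * (d : ℝ) ^ 3) μ :=
    ((integrable_inner_sq hprob hsph v).const_mul _).add (integrable_const _)
  have hle : ∀ᵐ u ∂μ, ‖((f (x + lam • u) - f (x - lam • u)) / (2 * lam)) • u‖ ^ 2 ≤
      2 * (d : ℝ) * ⟪v, u⟫ ^ 2 + ell ^ 2 / 2 * lam ^ 2 * (d : ℝ) ^ 3 := by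
    filter_upwards [ae_norm hprob hsph] with u hu
    have hu2 : ‖u‖ ^ 2 = (d : ℝ) := by rw [hu, Real.sq_sqrt (Nat.cast_nonneg d)]
    have hnsm : ∀ c : ℝ, ‖c • u‖ ^ 2 = c ^ 2 * (d : ℝ) := by
      intro c
      rw [norm_smul, mul_pow, Real.norm_eq_abs, sq_abs, hu2]
    have hA0 := taylor_bound hf hsmooth x (lam • u)
    have hB0 := taylor_bound hf hsmooth x (-(lam • u))
    rw [real_inner_smul_right, hnsm] at hA0
    rw [inner_neg_right, real_inner_smul_right, norm_neg, hnsm, ← sub_eq_add_neg] at hB0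
    set A : ℝ := f (x + lam • u) - f x - lam * ⟪v, u⟫ with hAdef
    set B : ℝ := f (x - lam • u) - f x - -(lam * ⟪v, u⟫) with hBdef
    have hab : f (x + lam • u) - f (x - lam • u) = A - B + 2 * lam * ⟪v, u⟫ := by
      rw [hAdef, hBdef]; ring
    rw [hnsm, hab]
    have h2l : (0 : ℝ) < (2 * lam) ^ 2 := by positivity
    rw [div_pow, div_mul_eq_mul_div, div_le_iff₀ h2l]
    have hA1 := abs_le.1 hA0
    have hB1 := abs_le.1 hB0
    have hs : (A - B) ^ 2 ≤ (ell * lam ^ 2 * (d : ℝ)) ^ 2 := by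
      apply sq_le_sq'
      · linarith [hA1.1, hB1.2]
      · linarith [hA1.2, hB1.1]
    set p : ℝ := ⟪v, u⟫ with hp
    calc (A - B + 2 * lam * p) ^ 2 * (d : ℝ)
        ≤ (2 * (A - B) ^ 2 + 8 * lam ^ 2 * p ^ 2) * (d : ℝ) := by
          apply mul_le_mul_of_nonneg_right _ hdpos
          nlinarith [sq_nonneg (A - B - 2 * lam * p)]
      _ ≤ (2 * (ell * lam ^ 2 * (d : ℝ)) ^ 2 + 8 * lam ^ 2 * p ^ 2) * (d : ℝ) := by
          apply mul_le_mul_of_nonneg_right _ hdpos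
          linarith [hs]
      _ = (2 * (d : ℝ) * p ^ 2 + ell ^ 2 / 2 * lam ^ 2 * (d : ℝ) ^ 3) * (2 * lam) ^ 2 := by
          ring
  calc (∫ u, ‖((f (x + lam • u) - f (x - lam • u)) / (2 * lam)) • u‖ ^ 2 ∂μ)
      ≤ ∫ u, (2 * (d : ℝ) * ⟪v, u⟫ ^ 2 + ell ^ 2 / 2 * lam ^ 2 * (d : ℝ) ^ 3) ∂μ :=
        integral_mono_of_nonneg (Filter.Eventually.of_forall fun u => by positivity) hG hle
    _ = 2 * (d : ℝ) * ‖v‖ ^ 2 + ell ^ 2 / 2 * lam ^ 2 * (d : ℝ) ^ 3 := by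
        rw [integral_add ((integrable_inner_sq hprob hsph v).const_mul _) (integrable_const _),
          integral_const_mul, inner_sq_integral hd ⟨hprob, hsph, hinv⟩ v,
          integral_const, probReal_univ, one_smul]
end
end
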